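/- arXiv:1205.5053 — 3 statements merged into one kernel-verified Lean document; each statement's English description precedes it below -/
import Mathlib

section
/- Let S be a subfield of a field K, A an S-algebra, and F any field extension of S. If f ∈ S⟨x₁,...,x_d⟩ is a multilinear polynomial such that f = 0 is a polynomial identity for A, then f = 0 is a polynomial identity for F ⊗_S A. -/
open scoped TensorProduct

/-- `f` is multilinear: a `K`-linear combination of permutation monomials. -/
def IsMultilinearPoly (K : Type*) [CommSemiring K] (d : ℕ)
    (f : FreeAlgebra K (Fin d)) : Prop :=
  f ∈ Submodule.span K
    {g | ∃ σ : Equiv.Perm (Fin d),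
      g = (List.ofFn fun i => FreeAlgebra.ι K (σ i)).prod}

private lemma tmul_ofFn_prod {S F A : Type*} [CommSemiring S] [CommSemiring F] [Semiring A]
    [Algebra S F] [Algebra S A] :
    ∀ (n : ℕ) (t : Fin n → F) (a : Fin n → A),
      (List.ofFn (fun i => t i ⊗ₜ[S] a i)).prod
        = (∏ i, t i) ⊗ₜ[S] (List.ofFn a).prod := by
  intro n
  induction n with
  | zero => intro t a; simp [Algebra.TensorProduct.one_def]
  | succ n ih =>
      intro t a
      rw [List.ofFn_succ, List.ofFn_succ (f := a), List.prod_cons, List.prod_cons,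
        ih (fun i => t i.succ) (fun i => a i.succ), Algebra.TensorProduct.tmul_mul_tmul,
        Fin.prod_univ_succ]

/-- Evaluating the image of `f ∈ S⟨X⟩` in `F⟨X⟩` on `F ⊗[S] A` is
the same as evaluating `f` via the `S`-algebra structure of `F ⊗[S] A`. -/
theorem stmt3 {S F : Type*} [Field S] [Field F] [Algebra S F]
    {A : Type*} [Ring A] [Algebra S A] {d : ℕ}
    (f : FreeAlgebra S (Fin d)) (hml : IsMultilinearPoly S d f)
    (hPI : ∀ r : Fin d → A, FreeAlgebra.lift S r f = 0) :
    ∀ r : Fin d → F ⊗[S] A, FreeAlgebra.lift S r f = 0 := by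
  obtain ⟨T, hT, hTpure⟩ :
      ∃ T : MultilinearMap S (fun _ : Fin d => F ⊗[S] A) (F ⊗[S] A),
        (∀ r : Fin d → F ⊗[S] A, T r = FreeAlgebra.lift S r f) ∧
        (∀ (t : Fin d → F) (a : Fin d → A),
          T (fun i => t i ⊗ₜ[S] a i)
            = (∏ i, t i) ⊗ₜ[S] (FreeAlgebra.lift S a f : A)) := by
    refine Submodule.span_induction ?_ ?_ ?_ ?_ hml
    · rintro g ⟨σ, rfl⟩
      refine ⟨(MultilinearMap.mkPiAlgebraFin S d (F ⊗[S] A)).domDomCongr (σ : Fin d ≃ Fin d),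
        ?_, ?_⟩
      · intro r
        rw [MultilinearMap.domDomCongr_apply, MultilinearMap.mkPiAlgebraFin_apply,
          map_list_prod, List.map_ofFn]
        simp [Function.comp_def]
      · intro t a
        rw [MultilinearMap.domDomCongr_apply, MultilinearMap.mkPiAlgebraFin_apply]
        rw [map_list_prod, List.map_ofFn]
        simp only [Function.comp_def, FreeAlgebra.lift_ι_apply]
        rw [tmul_ofFn_prod d (fun i => t (σ i)) (fun i => a (σ i)),
          Equiv.prod_comp σ t]
    · exact ⟨0, fun r => by simp, fun t a => by simp⟩
    · rintro x y hx hy ⟨T₁, h₁, h₁'⟩ ⟨T₂, h₂, h₂'⟩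
      refine ⟨T₁ + T₂, fun r => by simp [h₁ r, h₂ r], fun t a => by
        simp [h₁' t a, h₂' t a, TensorProduct.tmul_add]⟩
    · rintro c x hx ⟨T₁, h₁, h₁'⟩
      refine ⟨c • T₁, fun r => by simp [h₁ r], fun t a => by
        simp [h₁' t a, TensorProduct.tmul_smul]⟩
  intro r
  rw [← hT r]
  have hz : T = 0 := by
    apply Module.Basis.ext_multilinear (fun _ => (Module.Basis.ofVectorSpace S F).tensorProduct (Module.Basis.ofVectorSpace S A))
    intro v
    have := hTpure (fun i => Module.Basis.ofVectorSpace S F (v i).1)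
      (fun i => Module.Basis.ofVectorSpace S A (v i).2)
    rw [hPI] at this
    simpa [Module.Basis.tensorProduct_apply'] using this
  rw [hz]
  simp
end

section
/- Let K be an infinite field, R a K-algebra, and f ∈ K⟨x₁,...,x_d⟩ a polynomial identity for R. Then each multihomogeneous component of f (the sum of monomials of f having a fixed degree in each variable x₁,...,x_d) is also a polynomial identity for R. -/
open scoped Classical

/-- The multidegree of a word in the free monoid on `Fin d`. -/
def wordMultidegree {d : ℕ} (w : FreeMonoid (Fin d)) : Fin d → ℕ :=
  fun i => (FreeMonoid.toList w).count i

/-- The multihomogeneous component of multidegree `m` of `f ∈ K⟨x₁,…,x_d⟩`: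
the sum of the terms of `f` whose monomials have degree `m i` in each `xᵢ`. -/
noncomputable def multihomComponent {K : Type*} [CommRing K] {d : ℕ}
    (m : Fin d → ℕ) (f : FreeAlgebra K (Fin d)) : FreeAlgebra K (Fin d) :=
  (FreeAlgebra.equivMonoidAlgebraFreeMonoid (R := K) (X := Fin d)).symm
    (MonoidAlgebra.ofCoeff (((FreeAlgebra.equivMonoidAlgebraFreeMonoid (R := K) (X := Fin d)) f).coeff.filter
      (fun w => wordMultidegree w = m)))

section Aux

variable {K : Type*} [CommRing K] {R : Type*} [Ring R] [Algebra K R] {d : ℕ}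

/-- `FreeAlgebra.lift` expressed through the monoid algebra. -/
lemma lift_eq_sum (r : Fin d → R) (x : FreeAlgebra K (Fin d)) :
    FreeAlgebra.lift K r x =
      (FreeAlgebra.equivMonoidAlgebraFreeMonoid (R := K) (X := Fin d) x).coeff.sum
        fun w c => c • (FreeMonoid.lift r w : R) := by
  have key : (MonoidAlgebra.lift K R (FreeMonoid (Fin d)) (FreeMonoid.lift r)).comp
      (FreeAlgebra.equivMonoidAlgebraFreeMonoid (R := K) (X := Fin d)).toAlgHom
      = FreeAlgebra.lift K r := by
    apply FreeAlgebra.hom_ext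
    funext i
    simp [FreeAlgebra.equivMonoidAlgebraFreeMonoid]
  rw [← key]
  simp [MonoidAlgebra.lift_apply]

/-- Scaling variables scales a word by the monomial in its multidegree. -/
lemma lift_smul_word (l : Fin d → K) (r : Fin d → R) (w : FreeMonoid (Fin d)) :
    (FreeMonoid.lift (fun i => l i • r i) w : R)
      = (∏ i, l i ^ wordMultidegree w i) • (FreeMonoid.lift r w : R) := by
  rw [FreeMonoid.lift_apply, FreeMonoid.lift_apply]
  unfold wordMultidegree
  induction FreeMonoid.toList w with
  | nil => simp
  | cons a t ih =>
      simp only [List.map_cons, List.prod_cons, ih, List.count_cons]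
      rw [mul_smul_comm, smul_mul_assoc, smul_smul]
      congr 1
      have key : ∀ i : Fin d, l i ^ (List.count i t + if (a == i) = true then 1 else 0)
          = l i ^ List.count i t * (if i = a then l i else 1) := by
        intro i
        by_cases h : a = i
        · subst h; simp [pow_succ]
        · simp [h, Ne.symm h]
      simp only [key, Finset.prod_mul_distrib]
      rw [Finset.prod_ite_eq' Finset.univ a l]
      simp

lemma lift_component_eq (r : Fin d → R) (f : FreeAlgebra K (Fin d)) (m : Fin d → ℕ) :
    FreeAlgebra.lift K r (multihomComponent m f)
      = ∑ w ∈ (FreeAlgebra.equivMonoidAlgebraFreeMonoid (R := K) (X := Fin d) f).coeff.support.filter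
          (fun w => wordMultidegree w = m),
          (FreeAlgebra.equivMonoidAlgebraFreeMonoid (R := K) (X := Fin d) f).coeff w
            • (FreeMonoid.lift r w : R) := by
  set F := FreeAlgebra.equivMonoidAlgebraFreeMonoid (R := K) (X := Fin d) f with hF
  rw [lift_eq_sum, multihomComponent, AlgEquiv.apply_symm_apply, MonoidAlgebra.coeff_ofCoeff]
  rw [Finsupp.sum, Finsupp.support_filter]
  refine Finset.sum_congr rfl fun w hw => ?_
  rw [Finset.mem_filter] at hw
  simp [Finsupp.filter_apply, hw.2, hF]

end Aux

/-- Vandermonde-type lemma: if a finitely supported `R`-valued "polynomial function"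
on `K^d` vanishes identically, `K` an infinite field, then all coefficients vanish. -/
lemma coeffs_eq_zero_of_forall_eval_eq_zero
    {K : Type*} [Field K] [Infinite K] {R : Type*} [AddCommGroup R] [Module K R] {d : ℕ}
    (M : Finset (Fin d → ℕ)) (c : (Fin d → ℕ) → R)
    (h : ∀ l : Fin d → K, ∑ m ∈ M, (∏ i, l i ^ m i) • c m = 0) :
    ∀ m ∈ M, c m = 0 := by
  intro m₀ hm₀
  set b := Module.Basis.ofVectorSpace K R
  have hrepr : b.repr (c m₀) = 0 := by
    ext j
    set P : MvPolynomial (Fin d) K :=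
      ∑ m ∈ M, MvPolynomial.monomial (Finsupp.equivFunOnFinite.symm m) (b.repr (c m) j)
    have hP : ∀ l : Fin d → K, MvPolynomial.eval l P = 0 := by
      intro l
      have := congrArg (fun x => b.repr x j) (h l)
      simpa [P, MvPolynomial.eval_monomial, Finsupp.prod_pow, map_sum, Finsupp.smul_apply,
        smul_eq_mul, mul_comm] using this
    have hP0 : P = 0 := by
      apply MvPolynomial.funext
      intro x
      simp [hP x]
    have := congrArg (fun p => MvPolynomial.coeff (Finsupp.equivFunOnFinite.symm m₀) p) hP0
    simp only [P, MvPolynomial.coeff_sum, MvPolynomial.coeff_monomial, MvPolynomial.coeff_zero] at this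
    rw [Finset.sum_eq_single m₀] at this
    · simpa using this
    · intro m hm hne
      rw [if_neg]
      intro hEq
      exact hne (Finsupp.equivFunOnFinite.symm.injective hEq)
    · intro hm; exact absurd hm₀ hm
  have := congrArg b.repr.symm hrepr
  simpa using this

theorem stmt4 {K : Type*} [Field K] [Infinite K]
    {R : Type*} [Ring R] [Algebra K R] {d : ℕ}
    (f : FreeAlgebra K (Fin d))
    (hPI : ∀ r : Fin d → R, FreeAlgebra.lift K r f = 0) :
    ∀ (m : Fin d → ℕ) (r : Fin d → R),
      FreeAlgebra.lift K r (multihomComponent m f) = 0 := by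
  intro m r
  set F := FreeAlgebra.equivMonoidAlgebraFreeMonoid (R := K) (X := Fin d) f with hF
  set M : Finset (Fin d → ℕ) := F.coeff.support.image wordMultidegree with hM
  by_cases hmM : m ∈ M
  · refine coeffs_eq_zero_of_forall_eval_eq_zero (K := K) M
      (fun m' => FreeAlgebra.lift K r (multihomComponent m' f)) ?_ m hmM
    intro l
    have h0 : FreeAlgebra.lift K (fun i => l i • r i) f = 0 := hPI _
    rw [lift_eq_sum] at h0
    have hsum : (F.coeff.sum fun w c => c • (FreeMonoid.lift (fun i => l i • r i) w : R))
        = ∑ m' ∈ M, (∏ i, l i ^ m' i) • FreeAlgebra.lift K r (multihomComponent m' f) := by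
      rw [Finsupp.sum]
      rw [← Finset.sum_fiberwise_of_maps_to (g := wordMultidegree) (t := M)
        (fun w hw => Finset.mem_image_of_mem _ hw)]
      refine Finset.sum_congr rfl fun m' _ => ?_
      rw [lift_component_eq, Finset.smul_sum]
      refine Finset.sum_congr rfl fun w hw => ?_
      rw [Finset.mem_filter] at hw
      rw [lift_smul_word, hw.2, smul_comm]
    rw [hsum] at h0
    exact h0
  · have : multihomComponent m f = 0 := by
      rw [multihomComponent]
      rw [show (Finsupp.filter (fun w => wordMultidegree w = m) F.coeff) = 0 from ?_]
      · simp
      · ext w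
        by_cases hw : wordMultidegree w = m
        · simp only [Finsupp.filter_apply, if_pos hw, Finsupp.coe_zero, Pi.zero_apply]
          by_contra hne
          exact hmM (hM ▸ Finset.mem_image.mpr ⟨w, Finsupp.mem_support_iff.mpr hne, hw⟩)
        · simp [Finsupp.filter_apply, hw]
    rw [this, map_zero]
end

section
/- Let F be a field extension of 𝔽_p (for p prime) and n ≥ 1. Suppose c ∈ 𝔽_p⟨x₁,...,x_d⟩ is a multilinear polynomial such that [c, x_{d+1}] = 0 is a polynomial identity for M_n(𝔽_p) and c is not a polynomial identity for M_n(𝔽_p). Then c is a central polynomial for M_n(F): every evaluation of c on M_n(F) is a scalar matrix, and some evaluation is nonzero. -/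
section Aux

variable {p : ℕ} [Fact p.Prime] {F : Type*} [Field F] [Algebra (ZMod p) F] {n d : ℕ}

noncomputable def phiM (p : ℕ) (F : Type*) [Field F] [Algebra (ZMod p) F] (n : ℕ) :
    Matrix (Fin n) (Fin n) (ZMod p) →ₐ[ZMod p] Matrix (Fin n) (Fin n) F :=
  (Algebra.ofId (ZMod p) F).mapMatrix

lemma phiM_injective : Function.Injective (phiM p F n) := by
  intro M N h
  ext i j
  have h2 : (algebraMap (ZMod p) F) (M i j) = (algebraMap (ZMod p) F) (N i j) := by
    have := Matrix.ext_iff.mpr h i j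
    simpa [phiM, Algebra.ofId] using this
  exact (algebraMap (ZMod p) F).injective h2

lemma lift_phiM (c : FreeAlgebra (ZMod p) (Fin d)) (r : Fin d → Matrix (Fin n) (Fin n) (ZMod p)) :
    FreeAlgebra.lift (ZMod p) (fun i => phiM p F n (r i)) c
      = phiM p F n (FreeAlgebra.lift (ZMod p) r c) := by
  have h : FreeAlgebra.lift (ZMod p) (fun i => phiM p F n (r i))
      = (phiM p F n).comp (FreeAlgebra.lift (ZMod p) r) := by
    ext i
    simp
  rw [h]; rfl

lemma exists_E (c : FreeAlgebra (ZMod p) (Fin d)) (hml : IsMultilinearPoly (ZMod p) d c) :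
    ∃ E : MultilinearMap F (fun _ : Fin d => Matrix (Fin n) (Fin n) F)
        (Matrix (Fin n) (Fin n) F),
      ∀ r, E r = FreeAlgebra.lift (ZMod p) r c := by
  refine Submodule.span_induction ?_ ?_ ?_ ?_ hml
  · rintro g ⟨σ, rfl⟩
    refine ⟨(MultilinearMap.mkPiAlgebraFin F d _).domDomCongr σ, fun r => ?_⟩
    simp [MultilinearMap.domDomCongr_apply, MultilinearMap.mkPiAlgebraFin_apply,
      map_list_prod, List.map_ofFn, Function.comp_def]
  · exact ⟨0, fun r => by simp⟩
  · rintro x y hx hy ⟨E1, h1⟩ ⟨E2, h2⟩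
    exact ⟨E1 + E2, fun r => by simp [h1, h2]⟩
  · rintro k x hx ⟨E, h⟩
    refine ⟨(algebraMap (ZMod p) F k) • E, fun r => ?_⟩
    simp [h, map_smul, algebraMap_smul]

end Aux

theorem stmt13 {p : ℕ} [Fact p.Prime] {F : Type*} [Field F]
    [Algebra (ZMod p) F] {n d : ℕ} (hn : 1 ≤ n)
    (c : FreeAlgebra (ZMod p) (Fin d)) (hml : IsMultilinearPoly (ZMod p) d c)
    (hcomm : ∀ (r : Fin d → Matrix (Fin n) (Fin n) (ZMod p))
      (s : Matrix (Fin n) (Fin n) (ZMod p)),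
      FreeAlgebra.lift (ZMod p) r c * s - s * FreeAlgebra.lift (ZMod p) r c = 0)
    (hnotPI : ∃ r : Fin d → Matrix (Fin n) (Fin n) (ZMod p),
      FreeAlgebra.lift (ZMod p) r c ≠ 0) :
    (∀ r : Fin d → Matrix (Fin n) (Fin n) F,
      ∃ a : F, FreeAlgebra.lift (ZMod p) r c = a • (1 : Matrix (Fin n) (Fin n) F))
    ∧ ∃ r : Fin d → Matrix (Fin n) (Fin n) F,
      FreeAlgebra.lift (ZMod p) r c ≠ 0 := by
  classical
  -- any evaluation over ZMod p is a scalar matrix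
  have hscal : ∀ r : Fin d → Matrix (Fin n) (Fin n) (ZMod p),
      ∃ a : ZMod p, FreeAlgebra.lift (ZMod p) r c = a • (1 : Matrix (Fin n) (Fin n) (ZMod p)) := by
    intro r
    have hmem : FreeAlgebra.lift (ZMod p) r c ∈ Set.range (Matrix.scalar (Fin n)) := by
      refine Matrix.mem_range_scalar_iff_commute_single'.mpr fun i j => ?_
      have h1 : FreeAlgebra.lift (ZMod p) r c * Matrix.single i j 1
          = Matrix.single i j 1 * FreeAlgebra.lift (ZMod p) r c :=
        sub_eq_zero.mp (hcomm r _)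
      exact Commute.symm h1
    obtain ⟨a, ha⟩ := hmem
    refine ⟨a, ?_⟩
    rw [← ha, Matrix.scalar_apply, Matrix.smul_eq_diagonal_mul, mul_one]
  obtain ⟨E, hE⟩ := exists_E (F := F) c hml
  have hbasis : ∀ v : Fin d → Fin n × Fin n,
      ∃ a : F, E (fun i => Matrix.stdBasis F (Fin n) (Fin n) (v i))
        = a • (1 : Matrix (Fin n) (Fin n) F) := by
    intro v
    have heq : (fun i => Matrix.stdBasis F (Fin n) (Fin n) (v i))
        = fun i => phiM p F n (Matrix.single (v i).1 (v i).2 1) := by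
      funext i
      rw [Matrix.stdBasis_eq_single]
      ext k l
      simp [phiM, Algebra.ofId, Matrix.single, apply_ite]
    obtain ⟨a, ha⟩ := hscal (fun i => Matrix.single (v i).1 (v i).2 1)
    refine ⟨algebraMap (ZMod p) F a, ?_⟩
    rw [heq, hE, lift_phiM, ha, ← Algebra.algebraMap_eq_smul_one, AlgHom.commutes,
      IsScalarTower.algebraMap_apply (ZMod p) F (Matrix (Fin n) (Fin n) F),
      Algebra.algebraMap_eq_smul_one]
  constructor
  · intro r
    set Q : Submodule F (Matrix (Fin n) (Fin n) F) :=
      Submodule.span F {(1 : Matrix (Fin n) (Fin n) F)} with hQ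
    have key : Q.mkQ.compMultilinearMap E = 0 := by
      apply Module.Basis.ext_multilinear (fun _ => Matrix.stdBasis F (Fin n) (Fin n))
      intro v
      obtain ⟨a, ha⟩ := hbasis v
      simp only [LinearMap.compMultilinearMap_apply, MultilinearMap.zero_apply,
        Submodule.mkQ_apply, Submodule.Quotient.mk_eq_zero, ha]
      exact Submodule.smul_mem _ _ (Submodule.mem_span_singleton_self _)
    have hmem : E r ∈ Q := by
      have h2 : Q.mkQ (E r) = 0 := by simpa using DFunLike.congr_fun key r
      exact (Submodule.Quotient.mk_eq_zero Q).mp h2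
    obtain ⟨a, ha⟩ := Submodule.mem_span_singleton.mp hmem
    exact ⟨a, by rw [← hE, ← ha]⟩
  · obtain ⟨r0, hr0⟩ := hnotPI
    refine ⟨fun i => phiM p F n (r0 i), ?_⟩
    rw [lift_phiM]
    intro h
    exact hr0 (phiM_injective (h.trans (map_zero _).symm))
end
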